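/- arXiv:1508.04514 — 2 statements merged into one kernel-verified Lean document; each statement's English description precedes it below -/
import Mathlib

section
/- Let S be a real m×n matrix, G a real k×n matrix, and r a natural number. Let G⁺ denote the Moore–Penrose inverse of G, and let B be any best rank-r approximation of the matrix S·G⁺·G (in the Frobenius norm). Then for every real k×k matrix M, the matrix F = B·G⁺·(I + M·(I − G·G⁺)) has rank at most r and is a minimizer of the rank-constrained least squares problem: for every real m×k matrix F′ with rank F′ ≤ r one has ‖S − F·G‖_F ≤ ‖S − F′·G‖_F; moreover F·G = B·G⁺·G, so all matrices of this family attain the same minimal value. -/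
open Matrix

/-- Frobenius norm of a real matrix: square root of the sum of squares of entries. -/
noncomputable def frobNorm {m n : Type*} [Fintype m] [Fintype n] (A : Matrix m n ℝ) : ℝ :=
  Real.sqrt (∑ i, ∑ j, (A i j) ^ 2)

/-- The four Penrose equations characterizing the Moore–Penrose inverse. -/
def IsMoorePenrose {m n : Type*} [Fintype m] [Fintype n]
    (G : Matrix m n ℝ) (B : Matrix n m ℝ) : Prop :=
  G * B * G = G ∧ B * G * B = B ∧ (G * B)ᵀ = G * B ∧ (B * G)ᵀ = B * G

noncomputable def frobSq {m n : Type*} [Fintype m] [Fintype n] (A : Matrix m n ℝ) : ℝ :=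
  ∑ i, ∑ j, (A i j) ^ 2

lemma frobSq_nonneg {m n : Type*} [Fintype m] [Fintype n] (A : Matrix m n ℝ) :
    0 ≤ frobSq A := by
  apply Finset.sum_nonneg; intro i _; apply Finset.sum_nonneg; intro j _; positivity

lemma frobNorm_eq {m n : Type*} [Fintype m] [Fintype n] (A : Matrix m n ℝ) :
    frobNorm A = Real.sqrt (frobSq A) := rfl

lemma frobSq_eq_trace {m n : Type*} [Fintype m] [Fintype n] (A : Matrix m n ℝ) :
    frobSq A = Matrix.trace (A * Aᵀ) := by
  simp [frobSq, Matrix.trace, Matrix.mul_apply, Matrix.diag, sq]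

lemma frobSq_add {m n : Type*} [Fintype m] [Fintype n] (X Y : Matrix m n ℝ)
    (h : Matrix.trace (X * Yᵀ) = 0) :
    frobSq (X + Y) = frobSq X + frobSq Y := by
  have h2 : Matrix.trace (Y * Xᵀ) = 0 := by
    have := Matrix.trace_transpose (X * Yᵀ)
    rw [Matrix.transpose_mul, Matrix.transpose_transpose] at this
    rw [this, h]
  simp only [frobSq_eq_trace, Matrix.transpose_add, Matrix.add_mul, Matrix.mul_add,
    Matrix.trace_add, h, h2]
  ring

lemma frobNorm_le_frobNorm {m n m' n' : Type*} [Fintype m] [Fintype n] [Fintype m'] [Fintype n']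
    (A : Matrix m n ℝ) (C : Matrix m' n' ℝ) (h : frobSq A ≤ frobSq C) :
    frobNorm A ≤ frobNorm C := Real.sqrt_le_sqrt h

lemma frobSq_le_frobSq {m n m' n' : Type*} [Fintype m] [Fintype n] [Fintype m'] [Fintype n']
    (A : Matrix m n ℝ) (C : Matrix m' n' ℝ) (h : frobNorm A ≤ frobNorm C) :
    frobSq A ≤ frobSq C := by
  by_contra hc
  push_neg at hc
  exact absurd h (not_le.2 (Real.sqrt_lt_sqrt (frobSq_nonneg C) hc))

theorem rank_constrained_least_squares_minimizer_family
    {m n k : ℕ} (S : Matrix (Fin m) (Fin n) ℝ) (G : Matrix (Fin k) (Fin n) ℝ)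
    (r : ℕ) (Gp : Matrix (Fin n) (Fin k) ℝ) (hGp : IsMoorePenrose G Gp)
    (B : Matrix (Fin m) (Fin n) ℝ)
    (hBrank : B.rank ≤ r)
    (hBbest : ∀ B' : Matrix (Fin m) (Fin n) ℝ, B'.rank ≤ r →
      frobNorm (S * Gp * G - B) ≤ frobNorm (S * Gp * G - B'))
    (M : Matrix (Fin k) (Fin k) ℝ) :
    (B * Gp * (1 + M * (1 - G * Gp))).rank ≤ r ∧
      (∀ F' : Matrix (Fin m) (Fin k) ℝ, F'.rank ≤ r →
        frobNorm (S - (B * Gp * (1 + M * (1 - G * Gp))) * G) ≤ frobNorm (S - F' * G)) ∧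
      (B * Gp * (1 + M * (1 - G * Gp))) * G = B * Gp * G := by
  obtain ⟨h1, h2, h3, h4⟩ := hGp
  set P : Matrix (Fin n) (Fin n) ℝ := Gp * G with hP
  have hPsymm : Pᵀ = P := h4
  have hPid : P * P = P := by
    have : Gp * G * Gp * G = Gp * G := by rw [h2]
    simpa [hP, Matrix.mul_assoc] using this
  have hGP : G * P = G := by
    simpa [hP, Matrix.mul_assoc] using h1
  -- F * G = B * Gp * G
  have hFG : (B * Gp * (1 + M * (1 - G * Gp))) * G = B * Gp * G := by
    have hz : (1 - G * Gp) * G = 0 := by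
      rw [Matrix.sub_mul, Matrix.one_mul, h1, sub_self]
    have hz2 : B * Gp * (M * (1 - G * Gp)) * G = 0 := by
      rw [Matrix.mul_assoc (B * Gp) _ G, Matrix.mul_assoc M, hz, Matrix.mul_zero,
        Matrix.mul_zero]
    rw [Matrix.mul_add, Matrix.mul_one, Matrix.add_mul, hz2, add_zero]
  refine ⟨?_, ?_, hFG⟩
  · calc (B * Gp * (1 + M * (1 - G * Gp))).rank ≤ (B * Gp).rank :=
          Matrix.rank_mul_le_left _ _
      _ ≤ B.rank := Matrix.rank_mul_le_left _ _
      _ ≤ r := hBrank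
  · intro F' hF'
    -- general orthogonality fact: trace (X*(1-P) * (Y*P)ᵀ) = 0
    have horth : ∀ (X Y : Matrix (Fin m) (Fin n) ℝ),
        Matrix.trace ((X * (1 - P)) * ((Y * P))ᵀ) = 0 := by
      intro X Y
      have : (1 - P) * Pᵀ = 0 := by
        rw [hPsymm, Matrix.sub_mul, Matrix.one_mul, hPid, sub_self]
      rw [Matrix.transpose_mul, ← Matrix.mul_assoc, Matrix.mul_assoc X, this,
        Matrix.mul_zero, Matrix.zero_mul, Matrix.trace_zero]
    -- pythagoras: for any Z with Z * P = Z, frobSq (S - Z) = frobSq (S*(1-P)) + frobSq (S*P - Z)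
    have hpyth : ∀ Z : Matrix (Fin m) (Fin n) ℝ, Z * P = Z →
        frobSq (S - Z) = frobSq (S * (1 - P)) + frobSq (S * P - Z) := by
      intro Z hZ
      have hsum : S - Z = S * (1 - P) + (S * P - Z) := by
        rw [Matrix.mul_sub, Matrix.mul_one]; abel
      have hform : S * P - Z = (S - Z) * P := by
        rw [Matrix.sub_mul, hZ]
      rw [hsum, frobSq_add _ _ (by rw [hform]; exact horth S (S - Z))]
    -- the candidate F'*G satisfies (F'*G)*P = F'*G
    have hF'GP : (F' * G) * P = F' * G := by rw [Matrix.mul_assoc, hGP]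
    have hBPP : (B * P) * P = B * P := by rw [Matrix.mul_assoc, hPid]
    -- frobSq (S*P - B*P) ≤ frobSq (S*P - B)
    have hproj : frobSq (S * P - B * P) ≤ frobSq (S * P - B) := by
      have hsum : S * P - B = (S * P - B * P) + (B * P - B) := by abel
      have h0 : B * P - B = (B * (1 - P)) * (-(1 : Matrix (Fin n) (Fin n) ℝ)) := by
        rw [Matrix.mul_neg, Matrix.mul_one, Matrix.mul_sub, Matrix.mul_one]; abel
      have hXP : S * P - B * P = ((S - B) * P) := by rw [Matrix.sub_mul]
      have htr : Matrix.trace ((S * P - B * P) * (B * P - B)ᵀ) = 0 := by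
        have : Matrix.trace ((B * (1 - P)) * ((S - B) * P)ᵀ) = 0 := horth B (S - B)
        have h5 : Matrix.trace (((S - B) * P) * (B * (1 - P))ᵀ) = 0 := by
          have := Matrix.trace_transpose ((B * (1 - P)) * ((S - B) * P)ᵀ)
          rw [Matrix.transpose_mul, Matrix.transpose_transpose] at this
          rw [this] at *
          exact horth B (S - B)
        have heq : B * P - B = -(B * (1 - P)) := by
          rw [Matrix.mul_sub, Matrix.mul_one]; abel
        rw [hXP, heq, Matrix.transpose_neg, Matrix.mul_neg, Matrix.trace_neg, h5, neg_zero]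
      have := frobSq_add _ _ htr
      rw [← hsum] at this
      nlinarith [frobSq_nonneg (B * P - B)]
    -- best approx applied to F'*G
    have hrank2 : (F' * G).rank ≤ r := le_trans (Matrix.rank_mul_le_left _ _) hF'
    have hbest := frobSq_le_frobSq _ _ (hBbest (F' * G) hrank2)
    have hSPG : S * Gp * G = S * P := by rw [hP, Matrix.mul_assoc]
    rw [hSPG] at hbest
    -- combine
    apply frobNorm_le_frobNorm
    rw [hFG]
    have hBGpG : B * Gp * G = B * P := by rw [hP, Matrix.mul_assoc]
    rw [hBGpG, hpyth (B * P) hBPP, hpyth (F' * G) hF'GP]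
    have : frobSq (S * P - B * P) ≤ frobSq (S * P - F' * G) := le_trans hproj hbest
    linarith
end

section
/- Let (Ω, Σ, μ) be a probability space, let x : Ω → ℝ^m be a random vector, and for j = 1,…,p let y_j : Ω → ℝ^{n_j} be random vectors, all components lying in L²(μ); let y : Ω → ℝ^n (with n = n₁+…+n_p) be the concatenation of y₁,…,y_p. Let S be the positive semidefinite square root of E_yy, B the Moore–Penrose inverse of S, H = E_xy·B, and write S in row blocks S = [G₁ᵀ, …, G_pᵀ]ᵀ with G_j ∈ ℝ^{n_j×n} conforming to the partition of y. Then for every tuple of real matrices F_j ∈ ℝ^{m×n_j} (j = 1,…,p), ∫_Ω ‖x(ω) − Σ_{j=1}^p F_j·y_j(ω)‖₂² dμ(ω) = tr(E_xx) − ‖H‖_F² + ‖H − Σ_{j=1}^p F_j·G_j‖_F². Consequently, for any rank bounds r₁,…,r_p, the infimum of the left-hand side over all tuples with rank F_j ≤ r_j equals tr(E_xx) − ‖H‖_F² plus the infimum of ‖H − Σ_j F_j·G_j‖_F² over the same tuples. -/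
open MeasureTheory Matrix

section Helpers

variable {Ω : Type*} [MeasurableSpace Ω] {μ : Measure Ω}

private lemma myIntMul {f g : Ω → ℝ} (hf : MemLp f 2 μ) (hg : MemLp g 2 μ) :
    Integrable (fun ω => f ω * g ω) μ := by
  have h := hf.smul (φ := g) hg (r := 1)
    (hpqr := ⟨by norm_num [ENNReal.inv_two_add_inv_two]⟩)
  rw [memLp_one_iff_integrable] at h
  have he : (g • f) = fun ω => f ω * g ω := by funext ω; simp [mul_comm]
  rwa [he] at h

private lemma mySumMem {ι : Type*} [Fintype ι] (g : ι → Ω → ℝ) (hg : ∀ i, MemLp (g i) 2 μ)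
    (u : ι → ℝ) : MemLp (fun ω => ∑ i, u i * g i ω) 2 μ := by
  have h := memLp_finset_sum' (μ := μ) (p := 2) Finset.univ
    (f := fun i ω => u i * g i ω) (fun i _ => (hg i).const_mul (u i))
  have he : (∑ i : ι, fun ω => u i * g i ω) = fun ω => ∑ i, u i * g i ω := by
    funext ω; simp
  rwa [he] at h

private lemma myIntegralMulSum {ι : Type*} [Fintype ι] {f : Ω → ℝ} (hf : MemLp f 2 μ)
    (g : ι → Ω → ℝ) (hg : ∀ i, MemLp (g i) 2 μ) (u : ι → ℝ) :
    ∫ ω, f ω * ∑ i, u i * g i ω ∂μ = ∑ i, u i * ∫ ω, f ω * g i ω ∂μ := by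
  have h1 : ∀ ω, f ω * ∑ i, u i * g i ω = ∑ i, u i * (f ω * g i ω) := by
    intro ω; rw [Finset.mul_sum]; exact Finset.sum_congr rfl fun i _ => by ring
  simp_rw [h1]
  rw [integral_finset_sum]
  · exact Finset.sum_congr rfl fun i _ => by rw [MeasureTheory.integral_const_mul]
  · intro i _
    exact (myIntMul hf (hg i)).const_mul (u i)

private lemma myBilinear {ι : Type*} [Fintype ι] (g : ι → Ω → ℝ) (hg : ∀ i, MemLp (g i) 2 μ)
    (u v : ι → ℝ) :
    ∫ ω, (∑ i, u i * g i ω) * (∑ i, v i * g i ω) ∂μ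
      = ∑ i, ∑ i', u i * v i' * ∫ ω, g i ω * g i' ω ∂μ := by
  rw [myIntegralMulSum (mySumMem g hg u) g hg v]
  have h2 : ∀ i', ∫ ω, (∑ i, u i * g i ω) * g i' ω ∂μ
      = ∑ i, u i * ∫ ω, g i ω * g i' ω ∂μ := by
    intro i'
    calc ∫ ω, (∑ i, u i * g i ω) * g i' ω ∂μ
        = ∫ ω, g i' ω * ∑ i, u i * g i ω ∂μ := by
          congr 1; funext ω; ring
      _ = ∑ i, u i * ∫ ω, g i' ω * g i ω ∂μ := myIntegralMulSum (hg i') g hg u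
      _ = ∑ i, u i * ∫ ω, g i ω * g i' ω ∂μ := by
          refine Finset.sum_congr rfl fun i _ => ?_
          congr 1; congr 1; funext ω; ring
  calc ∑ i', v i' * ∫ ω, (∑ i, u i * g i ω) * g i' ω ∂μ
      = ∑ i', ∑ i, v i' * (u i * ∫ ω, g i ω * g i' ω ∂μ) := by
        refine Finset.sum_congr rfl fun i' _ => ?_
        rw [h2 i', Finset.mul_sum]
    _ = ∑ i, ∑ i', u i * v i' * ∫ ω, g i ω * g i' ω ∂μ := by
        rw [Finset.sum_comm]
        exact Finset.sum_congr rfl fun i _ => Finset.sum_congr rfl fun i' _ => by ring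

private lemma myExpand {ι : Type*} [Fintype ι] {f : Ω → ℝ} (hf : MemLp f 2 μ)
    (g : ι → Ω → ℝ) (hg : ∀ i, MemLp (g i) 2 μ) (c : ι → ℝ) :
    ∫ ω, (f ω - ∑ i, c i * g i ω) ^ 2 ∂μ
      = (∫ ω, f ω * f ω ∂μ) - 2 * ∑ i, c i * ∫ ω, f ω * g i ω ∂μ
        + ∑ i, ∑ i', c i * c i' * ∫ ω, g i ω * g i' ω ∂μ := by
  set G : Ω → ℝ := fun ω => ∑ i, c i * g i ω with hGdef
  have hG : MemLp G 2 μ := mySumMem g hg c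
  have I1 : Integrable (fun ω => f ω * f ω) μ := myIntMul hf hf
  have I2 : Integrable (fun ω => f ω * G ω) μ := myIntMul hf hG
  have I3 : Integrable (fun ω => G ω * G ω) μ := myIntMul hG hG
  calc ∫ ω, (f ω - ∑ i, c i * g i ω) ^ 2 ∂μ
      = ∫ ω, (f ω * f ω - 2 * (f ω * G ω) + G ω * G ω) ∂μ := by
        congr 1; funext ω; simp only [hGdef]; ring
    _ = (∫ ω, (f ω * f ω - 2 * (f ω * G ω)) ∂μ) + ∫ ω, G ω * G ω ∂μ :=
        integral_add (I1.sub (I2.const_mul 2)) I3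
    _ = (∫ ω, f ω * f ω ∂μ) - ∫ ω, 2 * (f ω * G ω) ∂μ + ∫ ω, G ω * G ω ∂μ := by
        rw [integral_sub I1 (I2.const_mul 2)]
    _ = (∫ ω, f ω * f ω ∂μ) - 2 * ∑ i, c i * ∫ ω, f ω * g i ω ∂μ
        + ∑ i, ∑ i', c i * c i' * ∫ ω, g i ω * g i' ω ∂μ := by
        rw [MeasureTheory.integral_const_mul, myIntegralMulSum hf g hg c]
        rw [show (∫ ω, G ω * G ω ∂μ) = ∑ i, ∑ i', c i * c i' * ∫ ω, g i ω * g i' ω ∂μ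
          from myBilinear g hg c c]

private lemma myZero {ι : Type*} [Fintype ι] (g : ι → Ω → ℝ) (hg : ∀ i, MemLp (g i) 2 μ)
    (u : ι → ℝ) (h0 : ∑ i, ∑ i', u i * u i' * ∫ ω, g i ω * g i' ω ∂μ = 0)
    {f : Ω → ℝ} (hf : MemLp f 2 μ) :
    ∑ i, u i * ∫ ω, f ω * g i ω ∂μ = 0 := by
  set G : Ω → ℝ := fun ω => ∑ i, u i * g i ω with hGdef
  have hG : MemLp G 2 μ := mySumMem g hg u
  have h1 : ∫ ω, G ω * G ω ∂μ = 0 := by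
    rw [show (∫ ω, G ω * G ω ∂μ) = ∑ i, ∑ i', u i * u i' * ∫ ω, g i ω * g i' ω ∂μ
      from myBilinear g hg u u]; exact h0
  have h2 : Integrable (fun ω => G ω * G ω) μ := myIntMul hG hG
  have h3 : (fun ω => G ω * G ω) =ᵐ[μ] 0 :=
    (integral_eq_zero_iff_of_nonneg (fun ω => mul_self_nonneg (G ω)) h2).mp h1
  have h4 : G =ᵐ[μ] 0 := h3.mono fun ω h => by
    have hh : G ω * G ω = 0 := h
    exact mul_self_eq_zero.mp hh
  have h5 : (fun ω => f ω * G ω) =ᵐ[μ] 0 := h4.mono fun ω h => by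
    have hh : G ω = 0 := h
    simp [hh]
  have h6 : ∫ ω, f ω * G ω ∂μ = 0 := by
    rw [integral_congr_ae h5]; simp
  rw [← myIntegralMulSum hf g hg u]
  exact h6

private lemma sumSigma {p : ℕ} {n : Fin p → ℕ} (f : ((j : Fin p) × Fin (n j)) → ℝ) :
    ∑ jk : (j : Fin p) × Fin (n j), f jk = ∑ j, ∑ k, f ⟨j, k⟩ := by
  rw [← Finset.univ_sigma_univ]; exact Finset.sum_sigma _ _ _

private lemma frobNorm_sq {a b : Type*} [Fintype a] [Fintype b] (A : Matrix a b ℝ) :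
    frobNorm A ^ 2 = ∑ i, ∑ j, (A i j) ^ 2 :=
  Real.sq_sqrt (Finset.sum_nonneg fun i _ => Finset.sum_nonneg fun j _ => sq_nonneg _)

private lemma myInfAdd (c : ℝ) (s : Set ℝ) (hne : s.Nonempty) (hbd : BddBelow s) :
    sInf ((fun t => c + t) '' s) = c + sInf s := by
  apply le_antisymm
  · obtain ⟨b, hb⟩ := hbd
    have hbd' : BddBelow ((fun t => c + t) '' s) := by
      refine ⟨c + b, ?_⟩
      rintro e ⟨t, ht, rfl⟩
      exact (add_le_add_iff_left c).mpr (hb ht)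
    have h1 : ∀ t ∈ s, sInf ((fun t => c + t) '' s) ≤ c + t := fun t ht =>
      csInf_le hbd' ⟨t, ht, rfl⟩
    have h2 : sInf ((fun t => c + t) '' s) - c ≤ sInf s :=
      le_csInf hne fun t ht => by linarith [h1 t ht]
    linarith
  · refine le_csInf (hne.image _) ?_
    rintro e ⟨t, ht, rfl⟩
    exact (add_le_add_iff_left c).mpr (csInf_le hbd ht)

end Helpers

theorem distributed_mse_frobenius_reduction
    {Ω : Type*} [MeasurableSpace Ω] (μ : Measure Ω) [IsProbabilityMeasure μ]
    {m p : ℕ} (n : Fin p → ℕ)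
    (x : Ω → Fin m → ℝ) (yblk : ∀ j : Fin p, Ω → Fin (n j) → ℝ)
    -- `y` is the concatenation of `y₁,…,y_p`, indexed by the sigma type `(j : Fin p) × Fin (n j)`
    (y : Ω → ((j : Fin p) × Fin (n j)) → ℝ)
    (hy_concat : ∀ ω (j : Fin p) (k : Fin (n j)), y ω ⟨j, k⟩ = yblk j ω k)
    (hx : ∀ i, MemLp (fun ω => x ω i) 2 μ)
    (hy : ∀ jk : (j : Fin p) × Fin (n j), MemLp (fun ω => y ω jk) 2 μ)
    (Exx : Matrix (Fin m) (Fin m) ℝ) (hExx : ∀ i j, Exx i j = ∫ ω, x ω i * x ω j ∂μ)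
    (Exy : Matrix (Fin m) ((j : Fin p) × Fin (n j)) ℝ)
    (hExy : ∀ i jk, Exy i jk = ∫ ω, x ω i * y ω jk ∂μ)
    (Eyy : Matrix ((j : Fin p) × Fin (n j)) ((j : Fin p) × Fin (n j)) ℝ)
    (hEyy : ∀ jk jk', Eyy jk jk' = ∫ ω, y ω jk * y ω jk' ∂μ)
    (S : Matrix ((j : Fin p) × Fin (n j)) ((j : Fin p) × Fin (n j)) ℝ)
    (hS : S.PosSemidef) (hSS : S * S = Eyy)
    (B : Matrix ((j : Fin p) × Fin (n j)) ((j : Fin p) × Fin (n j)) ℝ)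
    (hB : IsMoorePenrose S B)
    (H : Matrix (Fin m) ((j : Fin p) × Fin (n j)) ℝ) (hH : H = Exy * B)
    -- the row blocks `G_j` of `S`, conforming to the partition of `y`
    (G : ∀ j : Fin p, Matrix (Fin (n j)) ((j : Fin p) × Fin (n j)) ℝ)
    (hG : ∀ (j : Fin p) (k : Fin (n j)) l, G j k l = S ⟨j, k⟩ l)
    (r : Fin p → ℕ) :
    (∀ F : ∀ j : Fin p, Matrix (Fin m) (Fin (n j)) ℝ,
      ∫ ω, ∑ i, (x ω i - ∑ j, (F j).mulVec (yblk j ω) i) ^ 2 ∂μ =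
        Exx.trace - frobNorm H ^ 2 + frobNorm (H - ∑ j, F j * G j) ^ 2) ∧
    sInf {e : ℝ | ∃ F : ∀ j : Fin p, Matrix (Fin m) (Fin (n j)) ℝ,
        (∀ j, (F j).rank ≤ r j) ∧
        e = ∫ ω, ∑ i, (x ω i - ∑ j, (F j).mulVec (yblk j ω) i) ^ 2 ∂μ} =
      Exx.trace - frobNorm H ^ 2 +
        sInf {e : ℝ | ∃ F : ∀ j : Fin p, Matrix (Fin m) (Fin (n j)) ℝ,
          (∀ j, (F j).rank ≤ r j) ∧ e = frobNorm (H - ∑ j, F j * G j) ^ 2} := by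
  classical
  -- symmetry of S
  have hSt : Sᵀ = S := by
    have h := hS.1
    ext i j
    have := congrFun (congrFun h i) j
    simpa [Matrix.conjTranspose_apply] using this
  -- S * Bᵀ = B * S
  have hSBt : S * Bᵀ = B * S := by
    have h := hB.2.2.2
    calc S * Bᵀ = Sᵀ * Bᵀ := by rw [hSt]
      _ = (B * S)ᵀ := (Matrix.transpose_mul B S).symm
      _ = B * S := h
  -- key analytic fact : Exy * (B * S) = Exy
  have hkey : Exy * (B * S) = Exy := by
    have h0 : Exy * (1 - B * S) = 0 := by
      ext i l
      set u : ((j : Fin p) × Fin (n j)) → ℝ := fun jk => (1 - B * S) jk l with hu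
      have hSz : S * (1 - B * S) = 0 := by
        rw [Matrix.mul_sub, Matrix.mul_one, ← Matrix.mul_assoc, hB.1, sub_self]
      have hSu : ∀ a, ∑ jk, S a jk * u jk = 0 := by
        intro a
        have h := congrFun (congrFun hSz a) l
        rw [Matrix.mul_apply] at h
        simpa [hu] using h
      have hEu : ∀ jk, ∑ jk', Eyy jk jk' * u jk' = 0 := by
        intro jk
        have e1 : ∑ jk', Eyy jk jk' * u jk'
            = ∑ a, S jk a * ∑ jk', S a jk' * u jk' := by
          rw [← hSS]
          simp_rw [Matrix.mul_apply, Finset.sum_mul, Finset.mul_sum]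
          rw [Finset.sum_comm]
          exact Finset.sum_congr rfl fun a _ => Finset.sum_congr rfl fun jk' _ => by ring
        rw [e1]
        simp_rw [hSu]
        simp
      have hquad : ∑ jk, ∑ jk', u jk * u jk' * ∫ ω, y ω jk * y ω jk' ∂μ = 0 := by
        have e2 : ∀ jk, ∑ jk', u jk * u jk' * ∫ ω, y ω jk * y ω jk' ∂μ
            = u jk * ∑ jk', Eyy jk jk' * u jk' := by
          intro jk
          rw [Finset.mul_sum]
          exact Finset.sum_congr rfl fun jk' _ => by rw [hEyy]; ring
        simp_rw [e2, hEu]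
        simp
      have hz := myZero (fun jk ω => y ω jk) hy u hquad (hx i)
      rw [Matrix.mul_apply, Matrix.zero_apply, ← hz]
      refine Finset.sum_congr rfl fun jk _ => ?_
      show Exy i jk * u jk = u jk * ∫ ω, x ω i * y ω jk ∂μ
      rw [hExy]; ring
    rw [Matrix.mul_sub, Matrix.mul_one, sub_eq_zero] at h0
    exact h0.symm
  have hBSE : (B * S) * Exyᵀ = Exyᵀ := by
    calc (B * S) * Exyᵀ = (B * S)ᵀᵀ * Exyᵀ := by rw [Matrix.transpose_transpose]
      _ = (Exy * (B * S)ᵀ)ᵀ := (Matrix.transpose_mul _ _).symm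
      _ = (Exy * (B * S))ᵀ := by rw [hB.2.2.2]
      _ = Exyᵀ := by rw [hkey]
  -- the main identity, for every F
  have main_id : ∀ F : ∀ j : Fin p, Matrix (Fin m) (Fin (n j)) ℝ,
      ∫ ω, ∑ i, (x ω i - ∑ j, (F j).mulVec (yblk j ω) i) ^ 2 ∂μ =
        Exx.trace - frobNorm H ^ 2 + frobNorm (H - ∑ j, F j * G j) ^ 2 := by
    intro F
    set C : Matrix (Fin m) ((j : Fin p) × Fin (n j)) ℝ :=
      Matrix.of fun i jk => F jk.1 i jk.2 with hC
    -- pointwise rewriting of the linear predictor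
    have hpt : ∀ ω i, (x ω i - ∑ j, (F j).mulVec (yblk j ω) i)
        = (x ω i - ∑ jk, C i jk * y ω jk) := by
      intro ω i
      congr 1
      rw [sumSigma (fun jk => C i jk * y ω jk)]
      refine (Finset.sum_congr rfl fun j _ => ?_).symm
      simp [Matrix.mulVec, dotProduct, hy_concat, hC]
    have hint : ∀ i, Integrable (fun ω => (x ω i - ∑ jk, C i jk * y ω jk) ^ 2) μ := by
      intro i
      have hm : MemLp (fun ω => x ω i - ∑ jk, C i jk * y ω jk) 2 μ := by
        have := (hx i).sub (mySumMem (fun jk ω => y ω jk) hy (C i))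
        exact this
      exact hm.integrable_sq
    have step1 : ∫ ω, ∑ i, (x ω i - ∑ j, (F j).mulVec (yblk j ω) i) ^ 2 ∂μ
        = ∑ i, ∫ ω, (x ω i - ∑ jk, C i jk * y ω jk) ^ 2 ∂μ := by
      simp_rw [hpt]
      exact integral_finset_sum _ fun i _ => hint i
    have step2 : ∀ i, ∫ ω, (x ω i - ∑ jk, C i jk * y ω jk) ^ 2 ∂μ
        = Exx i i - 2 * ∑ jk, C i jk * Exy i jk
          + ∑ jk, ∑ jk', C i jk * C i jk' * Eyy jk jk' := by
      intro i
      rw [myExpand (hx i) (fun jk ω => y ω jk) hy (C i), hExx]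
      congr 1
      · congr 1
        congr 1
        exact Finset.sum_congr rfl fun jk _ => by rw [hExy]
      · exact Finset.sum_congr rfl fun jk _ => Finset.sum_congr rfl fun jk' _ => by rw [hEyy]
    -- matrix identities
    have hm1 : C * S * Hᵀ = C * Exyᵀ := by
      calc C * S * Hᵀ = C * (S * Bᵀ * Exyᵀ) := by
            rw [hH, Matrix.transpose_mul, Matrix.mul_assoc C S, ← Matrix.mul_assoc S]
        _ = C * Exyᵀ := by rw [hSBt, hBSE]
    have hm2 : C * S * (C * S)ᵀ = C * Eyy * Cᵀ := by
      rw [Matrix.transpose_mul, hSt, Matrix.mul_assoc C S, ← Matrix.mul_assoc S S, hSS,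
        ← Matrix.mul_assoc]
    have fact1 : ∀ i, ∑ l, H i l * (C * S) i l = ∑ jk, C i jk * Exy i jk := by
      intro i
      have h := congrFun (congrFun hm1 i) i
      rw [Matrix.mul_apply, Matrix.mul_apply] at h
      calc ∑ l, H i l * (C * S) i l = ∑ l, (C * S) i l * Hᵀ l i :=
            Finset.sum_congr rfl fun l _ => by rw [Matrix.transpose_apply]; ring
        _ = ∑ jk, C i jk * Exyᵀ jk i := h
        _ = ∑ jk, C i jk * Exy i jk :=
            Finset.sum_congr rfl fun jk _ => by rw [Matrix.transpose_apply]
    have fact2 : ∀ i, ∑ l, ((C * S) i l) ^ 2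
        = ∑ jk, ∑ jk', C i jk * C i jk' * Eyy jk jk' := by
      intro i
      have h := congrFun (congrFun hm2 i) i
      rw [Matrix.mul_apply, Matrix.mul_apply] at h
      calc ∑ l, ((C * S) i l) ^ 2 = ∑ l, (C * S) i l * (C * S)ᵀ l i :=
            Finset.sum_congr rfl fun l _ => by rw [Matrix.transpose_apply]; ring
        _ = ∑ jk', (C * Eyy) i jk' * Cᵀ jk' i := h
        _ = ∑ jk, ∑ jk', C i jk * C i jk' * Eyy jk jk' := by
            simp_rw [Matrix.mul_apply, Matrix.transpose_apply, Finset.sum_mul]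
            rw [Finset.sum_comm]
            exact Finset.sum_congr rfl fun jk _ => Finset.sum_congr rfl fun jk' _ => by ring
    have hCS : (∑ j, F j * G j) = C * S := by
      ext i l
      rw [Matrix.sum_apply, Matrix.mul_apply, sumSigma (fun jk => C i jk * S jk l)]
      refine Finset.sum_congr rfl fun j _ => ?_
      rw [Matrix.mul_apply]
      refine Finset.sum_congr rfl fun k _ => ?_
      rw [hG]
      simp [hC]
    have per_i : ∀ i, ∑ l, (H i l - (C * S) i l) ^ 2
        = ∑ l, (H i l) ^ 2 - 2 * (∑ jk, C i jk * Exy i jk)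
          + ∑ jk, ∑ jk', C i jk * C i jk' * Eyy jk jk' := by
      intro i
      have e : ∀ l, (H i l - (C * S) i l) ^ 2
          = (H i l) ^ 2 - 2 * (H i l * (C * S) i l) + ((C * S) i l) ^ 2 := fun l => by ring
      simp_rw [e]
      rw [Finset.sum_add_distrib, Finset.sum_sub_distrib, ← Finset.mul_sum, fact1 i, fact2 i]
    calc ∫ ω, ∑ i, (x ω i - ∑ j, (F j).mulVec (yblk j ω) i) ^ 2 ∂μ
        = ∑ i, (Exx i i - 2 * ∑ jk, C i jk * Exy i jk
            + ∑ jk, ∑ jk', C i jk * C i jk' * Eyy jk jk') := by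
          rw [step1]; exact Finset.sum_congr rfl fun i _ => step2 i
      _ = ∑ i, (Exx i i - ∑ l, (H i l) ^ 2 + ∑ l, (H i l - (C * S) i l) ^ 2) := by
          refine Finset.sum_congr rfl fun i _ => ?_
          rw [per_i i]; ring
      _ = Exx.trace - frobNorm H ^ 2 + frobNorm (H - ∑ j, F j * G j) ^ 2 := by
          rw [show Exx.trace = ∑ i, Exx i i from by simp [Matrix.trace, Matrix.diag],
            hCS, frobNorm_sq, frobNorm_sq,
            show ∑ i, ∑ l, ((H - C * S) i l) ^ 2 = ∑ i, ∑ l, (H i l - (C * S) i l) ^ 2 from by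
              simp [Matrix.sub_apply]]
          rw [← Finset.sum_sub_distrib, ← Finset.sum_add_distrib]
  refine ⟨main_id, ?_⟩
  -- second part
  have h2ne : ({e : ℝ | ∃ F : ∀ j : Fin p, Matrix (Fin m) (Fin (n j)) ℝ,
      (∀ j, (F j).rank ≤ r j) ∧ e = frobNorm (H - ∑ j, F j * G j) ^ 2}).Nonempty := by
    refine ⟨frobNorm (H - ∑ j, (0 : Matrix (Fin m) (Fin (n j)) ℝ) * G j) ^ 2,
      fun j => (0 : Matrix (Fin m) (Fin (n j)) ℝ), fun j => ?_, rfl⟩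
    simp [Matrix.rank_zero]
  have h2bd : BddBelow {e : ℝ | ∃ F : ∀ j : Fin p, Matrix (Fin m) (Fin (n j)) ℝ,
      (∀ j, (F j).rank ≤ r j) ∧ e = frobNorm (H - ∑ j, F j * G j) ^ 2} := by
    refine ⟨0, ?_⟩
    rintro e ⟨F, hF, rfl⟩
    positivity
  have himg : {e : ℝ | ∃ F : ∀ j : Fin p, Matrix (Fin m) (Fin (n j)) ℝ,
        (∀ j, (F j).rank ≤ r j) ∧
        e = ∫ ω, ∑ i, (x ω i - ∑ j, (F j).mulVec (yblk j ω) i) ^ 2 ∂μ}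
      = (fun t => Exx.trace - frobNorm H ^ 2 + t) ''
        {e : ℝ | ∃ F : ∀ j : Fin p, Matrix (Fin m) (Fin (n j)) ℝ,
          (∀ j, (F j).rank ≤ r j) ∧ e = frobNorm (H - ∑ j, F j * G j) ^ 2} := by
    ext e
    constructor
    · rintro ⟨F, hF, rfl⟩
      exact ⟨frobNorm (H - ∑ j, F j * G j) ^ 2, ⟨F, hF, rfl⟩, (main_id F).symm⟩
    · rintro ⟨t, ⟨F, hF, rfl⟩, rfl⟩
      exact ⟨F, hF, (main_id F).symm⟩
  rw [himg, myInfAdd _ _ h2ne h2bd]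
end
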